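/- Let x₀ = α₁v₁ + α₂v₂ + ⋯ + α_m v_m, where each α_j ∈ ℂ is nonzero, each v_j ∈ ℂ^n is a nonzero eigenvector of A with A v_j = λ_j v_j, and the eigenvalues λ₁,…,λ_m are pairwise distinct. Let y be the trajectory in the behavior B of Σ corresponding to the initial condition x₀, i.e., y(t) = C A^t x₀. Then supp(y) = ⋃_{j=1}^m supp(C v_j), where for a vector w ∈ ℂ^N, supp(w) := { i ∈ {1,…,N} : w_i ≠ 0 }. -/

import Mathlib

open Matrix

/-- The behavior of the LTI system Σ = (A, C): all output trajectories
`y(t) = C A^t x₀` for some initial condition `x₀`. -/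
def behavior {n N : ℕ} (A : Matrix (Fin n) (Fin n) ℂ) (C : Matrix (Fin N) (Fin n) ℂ) :
    Set (ℕ → Fin N → ℂ) :=
  { y | ∃ x₀ : Fin n → ℂ, ∀ t, y t = (C * A ^ t).mulVec x₀ }

/-- Observability of Σ = (A, C): the map `x₀ ↦ (C A^t x₀)ₜ` is injective. -/
def Observable {n N : ℕ} (A : Matrix (Fin n) (Fin n) ℂ) (C : Matrix (Fin N) (Fin n) ℂ) : Prop :=
  Function.Injective (fun x₀ : Fin n → ℂ => fun t : ℕ => (C * A ^ t).mulVec x₀)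

/-- The weight `‖y‖` of a trajectory: the number of component trajectories
that are not identically zero. -/
noncomputable def weight {N : ℕ} (y : ℕ → Fin N → ℂ) : ℕ :=
  Set.ncard {i : Fin N | ∃ t, y t i ≠ 0}

/-- The security index `δ(Σ) = min { ‖y‖ : y ∈ B, y ≠ 0 }`. -/
noncomputable def secIndex {n N : ℕ} (A : Matrix (Fin n) (Fin n) ℂ)
    (C : Matrix (Fin N) (Fin n) ℂ) : ℕ :=
  sInf {w : ℕ | ∃ y ∈ behavior A C, y ≠ 0 ∧ w = weight y}


lemma key_traj {n N m : ℕ}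
    (A : Matrix (Fin n) (Fin n) ℂ) (C : Matrix (Fin N) (Fin n) ℂ)
    (lam : Fin m → ℂ) (α : Fin m → ℂ)
    (v : Fin m → Fin n → ℂ)
    (heig : ∀ j, A.mulVec (v j) = lam j • v j) (t : ℕ) :
    (C * A ^ t).mulVec (∑ j, α j • v j) = ∑ j, (α j * lam j ^ t) • C.mulVec (v j) := by
  have hpow : ∀ (t : ℕ) (j : Fin m), (A ^ t).mulVec (v j) = (lam j ^ t) • v j := by
    intro t j
    induction t with
    | zero => simp [Matrix.one_mulVec]
    | succ t ih =>
        rw [pow_succ', pow_succ', ← Matrix.mulVec_mulVec, ih, Matrix.mulVec_smul, heig,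
          smul_smul, mul_comm]
  have lin : ∀ (k : ℕ) (M : Matrix (Fin k) (Fin n) ℂ) (f : Fin m → Fin n → ℂ),
      M.mulVec (∑ j, f j) = ∑ j, M.mulVec (f j) := by
    intro k M f
    exact map_sum (Matrix.mulVecLin M) f Finset.univ
  rw [← Matrix.mulVec_mulVec, lin]
  simp_rw [Matrix.mulVec_smul, hpow, smul_smul]
  rw [lin]
  simp_rw [Matrix.mulVec_smul]

lemma vand_zero {m : ℕ} (lam : Fin m → ℂ) (hlam : Function.Injective lam)
    (β : Fin m → ℂ) (h : ∀ t : ℕ, ∑ j, β j * lam j ^ t = 0) : β = 0 := by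
  set M : Matrix (Fin m) (Fin m) ℂ := (Matrix.vandermonde lam)ᵀ with hM
  have hdet : M.det ≠ 0 := by
    rw [hM, Matrix.det_transpose, Matrix.det_vandermonde]
    refine Finset.prod_ne_zero_iff.2 fun i _ => Finset.prod_ne_zero_iff.2 fun j hj => ?_
    have hij : i < j := Finset.mem_Ioi.1 hj
    exact sub_ne_zero.2 fun e => (ne_of_lt hij) (hlam e).symm
  have hMβ : M.mulVec β = 0 := by
    funext t
    simpa [hM, Matrix.mulVec, dotProduct, Matrix.vandermonde, mul_comm] using h (t : ℕ)
  have hinj : Function.Injective M.mulVec :=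
    Matrix.mulVec_injective_iff_isUnit.2 ((Matrix.isUnit_iff_isUnit_det M).2 (isUnit_iff_ne_zero.2 hdet))
  exact hinj (by rw [hMβ, Matrix.mulVec_zero])

/-- Lemma 1 (support lemma): if `x₀ = Σ_j α_j v_j` is a combination of
eigenvectors of `A` for pairwise distinct eigenvalues, with all `α_j ≠ 0`,
and `y` is the trajectory of Σ with initial condition `x₀`, then
`supp(y) = ⋃_j supp(C v_j)`. -/
theorem supp_trajectory_eq_union_supp_eigen {n N m : ℕ}
    (A : Matrix (Fin n) (Fin n) ℂ) (C : Matrix (Fin N) (Fin n) ℂ)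
    (lam : Fin m → ℂ) (hlam : Function.Injective lam)
    (α : Fin m → ℂ) (hα : ∀ j, α j ≠ 0)
    (v : Fin m → Fin n → ℂ) (hv : ∀ j, v j ≠ 0)
    (heig : ∀ j, A.mulVec (v j) = lam j • v j)
    (x₀ : Fin n → ℂ) (hx₀ : x₀ = ∑ j, α j • v j)
    (y : ℕ → Fin N → ℂ) (hy : ∀ t, y t = (C * A ^ t).mulVec x₀) :
    {i : Fin N | ∃ t, y t i ≠ 0} = ⋃ j, {i : Fin N | C.mulVec (v j) i ≠ 0} := by
  have hyt : ∀ t i, y t i = ∑ j, (α j * lam j ^ t) * C.mulVec (v j) i := by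
    intro t i
    rw [hy t, hx₀, key_traj A C lam α v heig t]
    simp [Finset.sum_apply]
  ext i
  simp only [Set.mem_setOf_eq, Set.mem_iUnion]
  constructor
  · rintro ⟨t, ht⟩
    by_contra hno
    push_neg at hno
    apply ht
    rw [hyt]
    exact Finset.sum_eq_zero fun j _ => by rw [hno j, mul_zero]
  · rintro ⟨j₀, hj₀⟩
    by_contra hno
    push_neg at hno
    have hβ : (fun j => α j * C.mulVec (v j) i) = 0 := by
      apply vand_zero lam hlam
      intro t
      have := hno t
      rw [hyt] at this
      rw [← this]
      exact Finset.sum_congr rfl fun j _ => by ring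
    have := congrFun hβ j₀
    simp only [Pi.zero_apply, mul_eq_zero] at this
    rcases this with h | h
    · exact hα j₀ h
    · exact hj₀ h
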